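/- For any pca A and equivalence relation ∼ on A, left-algebraicity implies right-algebraicity (if f ∼ g implies ∀z, z·f ∼ z·g, then f ∼ g implies ∀x, f·x ∼ g·x, both in the extended sense), but not conversely: there exists an equivalence relation ∼ on ℕ (on Kleene's first model K₁) that is right-algebraic but not left-algebraic. -/

import Mathlib

/-- A partial combinatory algebra: a partial binary application together with
combinators `k` and `s` satisfying the usual laws. -/
structure PCA (A : Type) where
  app : A → A → Part A
  k : A
  s : A
  k_def : ∀ a : A, (app k a).Dom
  k_eq : ∀ a b : A, (app k a).bind (fun u => app u b) = Part.some a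
  s_def : ∀ a : A, (app s a).Dom
  s_def2 : ∀ a b : A, ((app s a).bind fun u => app u b).Dom
  s_eq : ∀ a b c : A,
    (((app s a).bind fun u => app u b).bind fun u => app u c) =
      (app a c).bind fun u => (app b c).bind fun v => app u v

/-- Extension of a relation on `A` to partial values: either both are
undefined, or both are defined with related values. -/
def PartRel {A : Type} (r : A → A → Prop) (x y : Part A) : Prop :=
  (¬ x.Dom ∧ ¬ y.Dom) ∨ (∃ a ∈ x, ∃ b ∈ y, r a b)

/-- Application in Kleene's first model `K₁`: `n·m = φₙ(m)`. -/
def K1 (n m : ℕ) : Part ℕ := (Denumerable.ofNat Nat.Partrec.Code n).eval m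

lemma partRel_refl {A : Type} {r : A → A → Prop} (hr : Equivalence r) (x : Part A) :
    PartRel r x x := by
  by_cases h : x.Dom
  · exact Or.inr ⟨x.get h, Part.get_mem h, x.get h, Part.get_mem h, hr.refl _⟩
  · exact Or.inl ⟨h, h⟩

lemma pca_app_of_get {A : Type} (P : PCA A) (X : Part A) (h : X.Dom) (b : A) :
    P.app (X.get h) b = X.bind fun u => P.app u b := by
  conv_rhs => rw [← Part.some_get h]
  rw [Part.bind_some]

/-- For any pca and equivalence relation, left-algebraicity implies
right-algebraicity, but not conversely: on `K₁` there is an equivalence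
relation that is right-algebraic but not left-algebraic. -/
theorem left_algebraic_implies_right_not_conversely :
    (∀ (A : Type) (P : PCA A) (r : A → A → Prop), Equivalence r →
      (∀ f g : A, r f g → ∀ z : A, PartRel r (P.app z f) (P.app z g)) →
      (∀ f g : A, r f g → ∀ x : A, PartRel r (P.app f x) (P.app g x))) ∧
    (∃ r : ℕ → ℕ → Prop, Equivalence r ∧
      (∀ f g : ℕ, r f g → ∀ x : ℕ, PartRel r (K1 f x) (K1 g x)) ∧
      ¬ (∀ f g : ℕ, r f g → ∀ z : ℕ, PartRel r (K1 z f) (K1 z g))) := by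
  constructor
  · intro A P r hr hleft f g hfg x
    -- i = s·k·k is an identity combinator
    set I : Part A := (P.app P.s P.k).bind fun u => P.app u P.k with hI
    have hIdom : I.Dom := P.s_def2 _ _
    set i : A := I.get hIdom with hi
    have happI : ∀ a : A, P.app i a = Part.some a := by
      intro a
      rw [hi, pca_app_of_get, hI, P.s_eq]
      set ka : A := (P.app P.k a).get (P.k_def a) with hka
      have h1 : P.app P.k a = Part.some ka := (Part.some_get _).symm
      have hk := P.k_eq a ka
      rw [h1, Part.bind_some] at hk ⊢
      rw [Part.bind_some]
      exact hk
    set kx : A := (P.app P.k x).get (P.k_def x) with hkx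
    have happkx : ∀ a : A, P.app kx a = Part.some x := by
      intro a
      have := P.k_eq x a
      rwa [← Part.some_get (P.k_def x), Part.bind_some, ← hkx] at this
    set Z : Part A := (P.app P.s i).bind fun u => P.app u kx with hZ
    have hZdom : Z.Dom := P.s_def2 _ _
    set z : A := Z.get hZdom with hz
    have happz : ∀ a : A, P.app z a = P.app a x := by
      intro a
      rw [hz, pca_app_of_get, hZ, P.s_eq, happI, Part.bind_some, happkx, Part.bind_some]
    have := hleft f g hfg z
    rwa [happz, happz] at this
  · -- counterexample on K₁
    refine ⟨fun a b => ∀ n, K1 a n = K1 b n, ⟨fun a n => rfl,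
      fun h n => (h n).symm, fun h1 h2 n => (h1 n).trans (h2 n)⟩, ?_, ?_⟩
    · intro f g hfg x
      rw [show K1 f x = K1 g x from hfg x]
      exact partRel_refl ⟨fun a n => rfl, fun h n => (h n).symm,
        fun h1 h2 n => (h1 n).trans (h2 n)⟩ _
    · intro H
      set f : ℕ := Encodable.encode Nat.Partrec.Code.zero with hf
      set g : ℕ := Encodable.encode (Nat.Partrec.Code.comp Nat.Partrec.Code.zero
        Nat.Partrec.Code.zero) with hg
      have hfg : ∀ n, K1 f n = K1 g n := by
        intro n
        simp [K1, hf, hg, Denumerable.ofNat_encode, Nat.Partrec.Code.eval]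
        show Part.some 0 = Part.bind (Part.some 0) (fun _ => Part.some 0)
        rw [Part.bind_some]
      have hne : g ≠ f := by
        intro h
        exact absurd (Encodable.encode_injective h) (by simp)
      -- a code computing: if n = f then 0 else diverge
      have hp : Nat.Partrec fun n => cond (decide (n = f)) (Part.some 0) Part.none := by
        refine Partrec.nat_iff.1 ?_
        exact Partrec.cond ((Primrec.eq.comp Primrec.id (Primrec.const f)).decide.to_comp)
          (Partrec.const' _) Partrec.none
      obtain ⟨c, hc⟩ := Nat.Partrec.Code.exists_code.1 hp
      have hzf : K1 (Encodable.encode c) f = Part.some 0 := by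
        simp [K1, Denumerable.ofNat_encode, hc]
      have hzg : K1 (Encodable.encode c) g = Part.none := by
        simp [K1, Denumerable.ofNat_encode, hc, hne]
      have := H f g hfg (Encodable.encode c)
      rw [hzf, hzg] at this
      rcases this with ⟨h1, _⟩ | ⟨a, ha, b, hb, _⟩
      · exact h1 ⟨⟩
      · exact Part.notMem_none b hb
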